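/- Let $\overline{X}, \overline{S} \in \mathbb{S}^n_+$ with $\langle \overline{X}, \overline{S}\rangle = 0$, simultaneously diagonalized by an orthogonal $\overline{P} = [\overline{P}_\alpha\ \overline{P}_\beta\ \overline{P}_\gamma]$ with $\overline{X} = \overline{P}_\alpha\Lambda_\alpha\overline{P}_\alpha^T$, $\Lambda_\alpha \succ 0$, and $\overline{S} = \overline{P}_\gamma\Lambda_\gamma\overline{P}_\gamma^T$, $\Lambda_\gamma \succ 0$. Then for any $S \in \mathbb{S}^n_+$, with $\widetilde{S} = \overline{P}^T S \overline{P}$ partitioned in blocks according to $(\alpha,\beta,\gamma)$, the projection of $-S$ onto $\mathcal{N}_{\mathbb{S}^n_+}(\overline{X})$ satisfies $\mathrm{dist}^2(-S, \mathcal{N}_{\mathbb{S}^n_+}(\overline{X})) = \|\widetilde{S}_{\alpha\alpha}\|^2 + 2\|\widetilde{S}_{\alpha\beta}\|^2 + 2\|\widetilde{S}_{\alpha\gamma}\|^2$. -/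

import Mathlib

open Matrix

attribute [local instance] Matrix.frobeniusNormedAddCommGroup

/-- The normal cone (in the ambient space `𝕊ⁿ` of symmetric matrices) of a set `D` of
symmetric matrices at a point `x`. -/
def matNormalCone {n : ℕ} (D : Set (Matrix (Fin n) (Fin n) ℝ))
    (x : Matrix (Fin n) (Fin n) ℝ) : Set (Matrix (Fin n) (Fin n) ℝ) :=
  {H | H.IsSymm ∧ ∀ z ∈ D, Matrix.trace (Hᵀ * (z - x)) ≤ 0}

namespace Stmt7Aux

lemma frob_sq {n : ℕ} (A : Matrix (Fin n) (Fin n) ℝ) : ‖A‖ ^ 2 = ∑ i, ∑ j, (A i j)^2 := by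
  have h0 : (0:ℝ) ≤ ∑ i, ∑ j, (A i j)^2 := by positivity
  rw [Matrix.frobenius_norm_def]
  have h : ∀ i j : Fin n, ‖A i j‖ ^ (2:ℝ) = (A i j)^2 := fun i j => by
    rw [show (2:ℝ) = ((2:ℕ):ℝ) by norm_num, Real.rpow_natCast]
    simp [Real.norm_eq_abs, sq_abs]
  simp_rw [h]
  rw [← Real.rpow_natCast _ 2, ← Real.rpow_mul h0]
  norm_num

lemma dot_single {n : ℕ} (K : Matrix (Fin n) (Fin n) ℝ) (i j : Fin n) :
    (Pi.single i (1:ℝ)) ⬝ᵥ K *ᵥ (Pi.single j 1) = K i j := by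
  simp [Matrix.mulVec, dotProduct, Pi.single_apply]

lemma psd_vecMulVec {n : ℕ} (w : Fin n → ℝ) : (Matrix.vecMulVec w w).PosSemidef := by
  refine Matrix.posSemidef_iff_dotProduct_mulVec.mpr ⟨?_, ?_⟩
  · ext i j; simp [Matrix.vecMulVec_apply, Matrix.conjTranspose_apply, mul_comm]
  · intro x
    have h : (Matrix.vecMulVec w w) *ᵥ x = fun i => w i * (w ⬝ᵥ x) := by
      ext i; simp [Matrix.vecMulVec_apply, Matrix.mulVec, dotProduct, Finset.mul_sum, mul_assoc]
    rw [h]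
    have h2 : (star x) ⬝ᵥ (fun i => w i * (w ⬝ᵥ x)) = (x ⬝ᵥ w) * (w ⬝ᵥ x) := by
      simp [dotProduct, Finset.sum_mul, mul_assoc]
    rw [h2, dotProduct_comm]
    exact mul_self_nonneg _

open scoped MatrixOrder in
lemma trace_mul_psd_nonneg {n : ℕ} {A B : Matrix (Fin n) (Fin n) ℝ}
    (hA : A.PosSemidef) (hB : B.PosSemidef) : 0 ≤ (A * B).trace := by
  obtain ⟨C, rfl⟩ : ∃ C : Matrix (Fin n) (Fin n) ℝ, A = Cᴴ * C := by
    classical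
    obtain ⟨X, hX, -, rfl⟩ := CFC.exists_sqrt_of_isSelfAdjoint_of_quasispectrumRestricts
      hA.isHermitian (QuasispectrumRestricts.nnreal_of_nonneg hA.nonneg)
    exact ⟨X, by rw [← Matrix.star_eq_conjTranspose, hX.star_eq]⟩
  rw [← Matrix.trace_mul_cycle C B Cᴴ]
  have hpsd : (C * B * Cᴴ).PosSemidef := hB.mul_mul_conjTranspose_same C
  rw [Matrix.trace]
  refine Finset.sum_nonneg fun i _ => ?_
  have := hpsd.dotProduct_mulVec_nonneg (Pi.single i 1)
  simpa [Matrix.mulVec, dotProduct, Pi.single_apply, Matrix.diag] using this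

lemma sumsq_eq_trace {n : ℕ} (A : Matrix (Fin n) (Fin n) ℝ) :
    ∑ i, ∑ j, (A i j)^2 = (Aᵀ * A).trace := by
  rw [Matrix.trace]
  simp only [Matrix.diag, Matrix.mul_apply, Matrix.transpose_apply, sq]
  rw [Finset.sum_comm]

lemma conj_sumsq {n : ℕ} (P A : Matrix (Fin n) (Fin n) ℝ) (hP1 : Pᵀ * P = 1) :
    ∑ i, ∑ j, ((P * A * Pᵀ) i j)^2 = ∑ i, ∑ j, (A i j)^2 := by
  rw [sumsq_eq_trace, sumsq_eq_trace]
  have key : ∀ X : Matrix (Fin n) (Fin n) ℝ, Pᵀ * (P * X) = X := fun X => by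
    rw [← Matrix.mul_assoc, hP1, Matrix.one_mul]
  have h1 : (P * A * Pᵀ)ᵀ * (P * A * Pᵀ) = P * (Aᵀ * (A * Pᵀ)) := by
    simp only [Matrix.transpose_mul, Matrix.transpose_transpose, Matrix.mul_assoc]
    rw [key]
  rw [h1, Matrix.trace_mul_comm P (Aᵀ * (A * Pᵀ)), Matrix.mul_assoc Aᵀ (A * Pᵀ) P,
    Matrix.mul_assoc A Pᵀ P, hP1, Matrix.mul_one]

lemma dot_conj {n : ℕ} (P H : Matrix (Fin n) (Fin n) ℝ) (v : Fin n → ℝ) :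
    v ⬝ᵥ (Pᵀ * H * P) *ᵥ v = (P *ᵥ v) ⬝ᵥ H *ᵥ (P *ᵥ v) := by
  rw [← Matrix.mulVec_mulVec, ← Matrix.mulVec_mulVec, Matrix.dotProduct_mulVec,
    Matrix.vecMul_transpose]

lemma trace_mul_vecMulVec {n : ℕ} (H : Matrix (Fin n) (Fin n) ℝ) (w : Fin n → ℝ) :
    (Hᵀ * Matrix.vecMulVec w w).trace = w ⬝ᵥ H *ᵥ w := by
  rw [Matrix.trace]
  simp only [Matrix.diag, Matrix.mul_apply, Matrix.transpose_apply, Matrix.vecMulVec_apply,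
    dotProduct, Matrix.mulVec]
  rw [Finset.sum_comm]
  refine Finset.sum_congr rfl fun k _ => ?_
  rw [Finset.mul_sum]
  exact Finset.sum_congr rfl fun i _ => by ring

lemma trace_conj {n : ℕ} (P A Z : Matrix (Fin n) (Fin n) ℝ) :
    (P * A * Pᵀ * Z).trace = (A * (Pᵀ * Z * P)).trace := by
  simp only [Matrix.mul_assoc]
  rw [Matrix.trace_mul_comm P (A * (Pᵀ * Z))]
  simp only [Matrix.mul_assoc]

end Stmt7Aux

open Stmt7Aux in
theorem stmt7 {n : ℕ} (α β γ : Finset (Fin n))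
    (hαβ : Disjoint α β) (hαγ : Disjoint α γ) (hβγ : Disjoint β γ)
    (hcover : α ∪ β ∪ γ = Finset.univ)
    (P : Matrix (Fin n) (Fin n) ℝ) (hP1 : Pᵀ * P = 1) (hP2 : P * Pᵀ = 1)
    (Λ : Fin n → ℝ) (hΛα : ∀ i ∈ α, 0 < Λ i) (hΛγ : ∀ i ∈ γ, 0 < Λ i)
    (Xbar Sbar : Matrix (Fin n) (Fin n) ℝ)
    (hXdef : Xbar = P * Matrix.diagonal (fun i => if i ∈ α then Λ i else 0) * Pᵀ)
    (hSdef : Sbar = P * Matrix.diagonal (fun i => if i ∈ γ then Λ i else 0) * Pᵀ)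
    (hXbar : Xbar.PosSemidef) (hSbar : Sbar.PosSemidef)
    (hXS : Matrix.trace (Xbarᵀ * Sbar) = 0)
    (S : Matrix (Fin n) (Fin n) ℝ) (hS : S.PosSemidef) :
    (Metric.infDist (-S)
        (matNormalCone {Y : Matrix (Fin n) (Fin n) ℝ | Y.PosSemidef} Xbar)) ^ 2 =
      (∑ i ∈ α, ∑ j ∈ α, ((Pᵀ * S * P) i j) ^ 2) +
        2 * (∑ i ∈ α, ∑ j ∈ β, ((Pᵀ * S * P) i j) ^ 2) +
        2 * (∑ i ∈ α, ∑ j ∈ γ, ((Pᵀ * S * P) i j) ^ 2) := by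
  classical
  set NC := matNormalCone {Y : Matrix (Fin n) (Fin n) ℝ | Y.PosSemidef} Xbar with hNC
  set T : Matrix (Fin n) (Fin n) ℝ := Pᵀ * S * P with hTdef
  set d : Fin n → ℝ := fun i => if i ∈ α then Λ i else 0 with hd
  set Dm : Matrix (Fin n) (Fin n) ℝ := Matrix.diagonal d with hDm
  -- basic facts
  have hSsymm : Sᵀ = S := by
    rw [← Matrix.conjTranspose_eq_transpose_of_trivial]; exact hS.1
  have hTsymm : Tᵀ = T := by
    rw [hTdef]
    simp only [Matrix.transpose_mul, Matrix.transpose_transpose, hSsymm, Matrix.mul_assoc]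
  have hTpsd : T.PosSemidef := by
    have := hS.conjTranspose_mul_mul_same P
    rwa [Matrix.conjTranspose_eq_transpose_of_trivial] at this
  have hPconj : ∀ X : Matrix (Fin n) (Fin n) ℝ, P * (Pᵀ * X * P) * Pᵀ = X := by
    intro X
    calc P * (Pᵀ * X * P) * Pᵀ = (P * Pᵀ) * X * (P * Pᵀ) := by simp only [Matrix.mul_assoc]
    _ = X := by rw [hP2, Matrix.one_mul, Matrix.mul_one]
  have hPTP : ∀ X : Matrix (Fin n) (Fin n) ℝ, Pᵀ * (P * X * Pᵀ) * P = X := by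
    intro X
    calc Pᵀ * (P * X * Pᵀ) * P = (Pᵀ * P) * X * (Pᵀ * P) := by simp only [Matrix.mul_assoc]
    _ = X := by rw [hP1, Matrix.one_mul, Matrix.mul_one]
  have hS' : P * T * Pᵀ = S := hPconj S
  -- the candidate projection point
  set e : Fin n → ℝ := fun i => if i ∈ α then 0 else 1 with he
  set E : Matrix (Fin n) (Fin n) ℝ := Matrix.diagonal e with hE
  set K₀ : Matrix (Fin n) (Fin n) ℝ := -(E * T * E) with hK₀
  set H₀ : Matrix (Fin n) (Fin n) ℝ := P * K₀ * Pᵀ with hH₀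
  have hK₀app : ∀ i j, K₀ i j = if i ∈ α ∨ j ∈ α then 0 else -(T i j) := by
    intro i j
    rw [hK₀, hE]
    by_cases hi : i ∈ α <;> by_cases hj : j ∈ α <;>
      simp [hi, hj, Matrix.mul_apply, Matrix.diagonal_apply, he, Finset.sum_ite_eq,
        Finset.sum_ite_eq', mul_comm]
  have hEsymm : Eᵀ = E := by rw [hE]; exact Matrix.diagonal_transpose e
  have hK₀symm : K₀ᵀ = K₀ := by
    rw [hK₀]
    simp only [Matrix.transpose_neg, Matrix.transpose_mul, hEsymm, hTsymm, Matrix.mul_assoc]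
  have hH₀symm : H₀ᵀ = H₀ := by
    rw [hH₀]
    simp only [Matrix.transpose_mul, Matrix.transpose_transpose, hK₀symm, Matrix.mul_assoc]
  -- membership of H₀ in the normal cone
  have hH₀mem : H₀ ∈ NC := by
    constructor
    · exact hH₀symm
    · intro Z hZ
      rw [hH₀symm, Matrix.mul_sub, Matrix.trace_sub]
      -- trace(H₀ * Xbar) = 0
      have htr1 : (H₀ * Xbar).trace = 0 := by
        rw [hH₀, hXdef, trace_conj P K₀ (P * Dm * Pᵀ), hPTP Dm, hDm, Matrix.trace]
        refine Finset.sum_eq_zero fun i _ => ?_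
        simp only [Matrix.diag, Matrix.mul_diagonal, hd]
        by_cases hi : i ∈ α
        · rw [hK₀app]; simp [hi]
        · simp [hi]
      rw [htr1, sub_zero]
      -- trace(H₀ * Z) ≤ 0
      have hZ' : Z.PosSemidef := hZ
      rw [hH₀, trace_conj P K₀ Z, hK₀, Matrix.neg_mul, Matrix.trace_neg, neg_nonpos]
      refine trace_mul_psd_nonneg ?_ ?_
      · have : (Eᴴ * T * E).PosSemidef := hTpsd.conjTranspose_mul_mul_same E
        rwa [Matrix.conjTranspose_eq_transpose_of_trivial, hEsymm] at this
      · have := hZ'.conjTranspose_mul_mul_same P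
        rwa [Matrix.conjTranspose_eq_transpose_of_trivial] at this
  have hne : NC.Nonempty := ⟨H₀, hH₀mem⟩
  -- the reference quantity
  set R : ℝ := ∑ i, ∑ j, (if i ∈ α ∨ j ∈ α then (T i j)^2 else 0) with hR
  have hR0 : 0 ≤ R := by
    rw [hR]
    refine Finset.sum_nonneg fun i _ => Finset.sum_nonneg fun j _ => ?_
    by_cases h : i ∈ α ∨ j ∈ α <;> simp [h, sq_nonneg]
  -- distance to the candidate point equals sqrt R
  have hdistsq : ‖(-S) - H₀‖^2 = R := by
    have hdiff : (-S) - H₀ = P * ((-T) - K₀) * Pᵀ := by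
      rw [← hS', hH₀]
      simp only [Matrix.mul_sub, Matrix.sub_mul, Matrix.mul_neg, Matrix.neg_mul]
    rw [hdiff, frob_sq, conj_sumsq _ _ hP1, hR]
    refine Finset.sum_congr rfl fun i _ => Finset.sum_congr rfl fun j _ => ?_
    rw [Matrix.sub_apply, Matrix.neg_apply, hK₀app]
    by_cases h : i ∈ α ∨ j ∈ α <;> simp [h] <;> ring
  -- lower bound for any point of the cone
  have hlower : ∀ H ∈ NC, R ≤ ‖(-S) - H‖^2 := by
    intro H hH
    obtain ⟨hHsymm', hHle⟩ := hH
    have hHsymm : Hᵀ = H := hHsymm'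
    set K : Matrix (Fin n) (Fin n) ℝ := Pᵀ * H * P with hK
    have hKsymm : ∀ a b, K b a = K a b := by
      intro a b
      have hKs : Kᵀ = K := by
        rw [hK]
        simp only [Matrix.transpose_mul, Matrix.transpose_transpose, hHsymm, Matrix.mul_assoc]
      have := congrFun (congrFun hKs a) b
      rwa [Matrix.transpose_apply] at this
    -- quadratic form of K is nonpositive
    have hq : ∀ v : Fin n → ℝ, v ⬝ᵥ K *ᵥ v ≤ 0 := by
      intro v
      have hZpsd : (Xbar + Matrix.vecMulVec (P *ᵥ v) (P *ᵥ v)).PosSemidef :=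
        hXbar.add (psd_vecMulVec _)
      have h1 := hHle _ hZpsd
      rw [add_sub_cancel_left, trace_mul_vecMulVec] at h1
      rw [hK, dot_conj]
      exact h1
    -- trace(Hᵀ Xbar) = 0
    have htr0 : (Hᵀ * Xbar).trace = 0 := by
      have h1 := hHle 0 (Matrix.PosSemidef.zero)
      have h2 := hHle (Xbar + Xbar) (hXbar.add hXbar)
      rw [zero_sub, Matrix.mul_neg, Matrix.trace_neg, neg_nonpos] at h1
      rw [add_sub_cancel_right] at h2
      linarith
    -- diagonal entries of K on α vanish
    have hKdiagle : ∀ i, K i i ≤ 0 := by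
      intro i
      have := hq (Pi.single i 1)
      rwa [dot_single] at this
    have hKd : ∀ i ∈ α, K i i = 0 := by
      have hcalc : (Hᵀ * Xbar).trace = ∑ i ∈ α, K i i * Λ i := by
        rw [hHsymm, hXdef, Matrix.trace_mul_comm, trace_conj P Dm H,
          Matrix.trace_mul_comm, ← hK, hDm, Matrix.trace]
        simp only [Matrix.diag, Matrix.mul_diagonal, hd, mul_ite, mul_zero]
        rw [Finset.sum_ite_mem, Finset.univ_inter]
      have hsum0 : ∑ i ∈ α, K i i * Λ i = 0 := by rw [← hcalc, htr0]
      have hterm : ∀ i ∈ α, K i i * Λ i ≤ 0 := fun i hi =>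
        mul_nonpos_of_nonpos_of_nonneg (hKdiagle i) (le_of_lt (hΛα i hi))
      intro i hi
      have := (Finset.sum_eq_zero_iff_of_nonpos hterm).mp hsum0 i hi
      rcases mul_eq_zero.mp this with h | h
      · exact h
      · exact absurd h (ne_of_gt (hΛα i hi))
    -- K vanishes on rows indexed by α
    have hKoff : ∀ i ∈ α, ∀ j, K i j = 0 := by
      intro i hi j
      by_cases hij : j = i
      · subst hij; exact hKd j hi
      · by_contra hne0
        set t : ℝ := (1 - K j j) / (2 * K i j) with ht
        set v : Fin n → ℝ := t • (Pi.single i 1 : Fin n → ℝ) + (Pi.single j 1 : Fin n → ℝ) with hv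
        have hexp : v ⬝ᵥ K *ᵥ v
            = t * (t * K i i) + t * K i j + t * K j i + K j j := by
          rw [hv]
          simp only [Matrix.mulVec_add, Matrix.mulVec_smul, add_dotProduct, dotProduct_add,
            smul_dotProduct, dotProduct_smul, smul_eq_mul, dot_single]
          ring
        have hq2 := hq v
        rw [hexp, hKd i hi, hKsymm i j, mul_zero, mul_zero, zero_add] at hq2
        have h2t : t * K i j + t * K i j = 1 - K j j := by
          rw [ht]
          field_simp
          ring
        linarith
    -- the norm bound
    have hHeq : P * K * Pᵀ = H := by rw [hK]; exact hPconj H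
    have hdiff2 : (-S) - H = P * ((-T) - K) * Pᵀ := by
      rw [← hS', ← hHeq]
      simp only [Matrix.mul_sub, Matrix.sub_mul, Matrix.mul_neg, Matrix.neg_mul]
    rw [hdiff2, frob_sq, conj_sumsq _ _ hP1, hR]
    refine Finset.sum_le_sum fun i _ => Finset.sum_le_sum fun j _ => ?_
    by_cases h : i ∈ α ∨ j ∈ α
    · have hK0 : K i j = 0 := by
        rcases h with h | h
        · exact hKoff i h j
        · rw [hKsymm j i]; exact hKoff j h i
      rw [if_pos h, Matrix.sub_apply, Matrix.neg_apply, hK0, sub_zero]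
      rw [neg_pow]
      norm_num
    · rw [if_neg h]
      exact sq_nonneg _
  -- assemble: infDist = sqrt R
  have hnormH₀ : ‖(-S) - H₀‖ = Real.sqrt R := by
    rw [← hdistsq, Real.sqrt_sq (norm_nonneg _)]
  have hub : Metric.infDist (-S) NC ≤ Real.sqrt R := by
    have := Metric.infDist_le_dist_of_mem (x := -S) hH₀mem
    rwa [dist_eq_norm, hnormH₀] at this
  have hlb : Real.sqrt R ≤ Metric.infDist (-S) NC := by
    by_contra hlt
    push_neg at hlt
    obtain ⟨H, hHmem, hdH⟩ := (Metric.infDist_lt_iff hne).mp hlt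
    have h1 : R ≤ ‖(-S) - H‖^2 := hlower H hHmem
    rw [dist_eq_norm] at hdH
    nlinarith [Real.sq_sqrt hR0, norm_nonneg ((-S) - H), Real.sqrt_nonneg R]
  rw [le_antisymm hub hlb, Real.sq_sqrt hR0, hR]
  -- the final sum identity
  have hsplit : ∀ f : Fin n → ℝ, ∑ j, f j = (∑ j ∈ α, f j) + (∑ j ∈ β, f j) + (∑ j ∈ γ, f j) := by
    intro f
    have hd2 : Disjoint (α ∪ β) γ := Finset.disjoint_union_left.mpr ⟨hαγ, hβγ⟩
    rw [← hcover, Finset.sum_union hd2, Finset.sum_union hαβ]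
  have hrowα : ∀ i ∈ α, (∑ j, if i ∈ α ∨ j ∈ α then (T i j)^2 else 0)
      = (∑ j ∈ α, (T i j)^2) + (∑ j ∈ β, (T i j)^2) + (∑ j ∈ γ, (T i j)^2) := by
    intro i hi
    have h1 : ∀ j, (if i ∈ α ∨ j ∈ α then (T i j)^2 else 0) = (T i j)^2 := fun j => by simp [hi]
    simp_rw [h1]
    exact hsplit _
  have hrowout : ∀ i, i ∉ α → (∑ j, if i ∈ α ∨ j ∈ α then (T i j)^2 else 0)
      = ∑ j ∈ α, (T i j)^2 := by
    intro i hi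
    have h1 : ∀ j, (if i ∈ α ∨ j ∈ α then (T i j)^2 else 0)
        = (if j ∈ α then (T i j)^2 else 0) := fun j => by simp [hi]
    simp_rw [h1]
    rw [Finset.sum_ite_mem, Finset.univ_inter]
  have hswap : ∀ s : Finset (Fin n), (∑ i ∈ s, ∑ j ∈ α, (T i j)^2)
      = ∑ i ∈ α, ∑ j ∈ s, (T i j)^2 := by
    intro s
    rw [Finset.sum_comm]
    refine Finset.sum_congr rfl fun a _ => Finset.sum_congr rfl fun b _ => ?_
    have := congrFun (congrFun hTsymm a) b
    rw [Matrix.transpose_apply] at this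
    rw [this]
  rw [hsplit (fun i => ∑ j, if i ∈ α ∨ j ∈ α then (T i j)^2 else 0)]
  rw [Finset.sum_congr rfl hrowα,
    Finset.sum_congr rfl (fun i hi => hrowout i (fun h => (Finset.disjoint_left.mp hαβ h) hi)),
    Finset.sum_congr rfl (fun i hi => hrowout i (fun h => (Finset.disjoint_left.mp hαγ h) hi)),
    hswap β, hswap γ, Finset.sum_add_distrib, Finset.sum_add_distrib]
  ring
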